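/- The monoid S presented by generators a, b, x_n, y_n (n ∈ ℤ) and relations a·b·x_n = b·x_n, a·b·y_n = b·y_{n+1} (n ∈ ℤ) is left cancellative, i.e., for all s, t, t' ∈ S, s·t = s·t' implies t = t'. -/

import Mathlib

/-- The alphabet of the monoid `S`: letters `a`, `b` and `x n`, `y n` for `n : ℤ`. -/
inductive SGen : Type
  | a : SGen
  | b : SGen
  | x : ℤ → SGen
  | y : ℤ → SGen

/-- The defining relations of `S`: `a·b·x n = b·x n` and `a·b·y n = b·y (n+1)` for `n ∈ ℤ`. -/
inductive SRel : FreeMonoid SGen → FreeMonoid SGen → Prop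
  | xr (n : ℤ) : SRel (.of .a * .of .b * .of (.x n)) (.of .b * .of (.x n))
  | yr (n : ℤ) : SRel (.of .a * .of .b * .of (.y n)) (.of .b * .of (.y (n + 1)))

/-- The monoid `S` presented by the generators `SGen` and the relations `SRel`. -/
abbrev S : Type := PresentedMonoid SRel

/-- The images of the generators in `S`. -/
def gen (g : SGen) : S := PresentedMonoid.of SRel g

/-- The principal right ideal `sS` of a monoid. -/
def rIdeal {M : Type*} [Monoid M] (s : M) : Set M := {m | ∃ u, m = s * u}

/-! ### Auxiliary machinery: a faithful left action of `S` on lists of letters. -/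

/-- The action of the letter `a` on words (normal forms). -/
def actA : List SGen → List SGen
  | .b :: .x n :: w => .b :: .x n :: w
  | .b :: .y n :: w => .b :: .y (n + 1) :: w
  | w => .a :: w

/-- The action of a letter on words. -/
def act1 : SGen → List SGen → List SGen
  | .a => actA
  | g => (g :: ·)

/-- A left inverse for `actA`. -/
def invA : List SGen → List SGen
  | .b :: .x n :: w => .b :: .x n :: w
  | .b :: .y n :: w => .b :: .y (n - 1) :: w
  | .a :: w => w
  | w => w

lemma invA_actA (w : List SGen) : invA (actA w) = w := by
  rcases w with _ | ⟨g, _ | ⟨g', w⟩⟩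
  · rfl
  · cases g <;> rfl
  · cases g <;> cases g' <;> simp [actA, invA]

lemma actA_injective : Function.Injective actA :=
  Function.LeftInverse.injective invA_actA

lemma act1_injective (g : SGen) : Function.Injective (act1 g) := by
  cases g
  · exact actA_injective
  all_goals exact fun u v h => List.tail_eq_of_cons_eq h

/-- The letter action, viewed as taking values in the endomorphism monoid. -/
def fEnd (g : SGen) : Function.End (List SGen) := act1 g

lemma SRel_lift (u v : FreeMonoid SGen) (h : SRel u v) :
    FreeMonoid.lift fEnd u = FreeMonoid.lift fEnd v := by
  cases h with
  | xr n =>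
    simp only [map_mul, FreeMonoid.lift_eval_of, Function.End.mul_def]
    funext w
    rfl
  | yr n =>
    simp only [map_mul, FreeMonoid.lift_eval_of, Function.End.mul_def]
    funext w
    rfl

/-- The action of `S` on words. -/
def Φ : S →* Function.End (List SGen) :=
  PresentedMonoid.lift fEnd SRel_lift

lemma Φ_mul (s t : S) (w : List SGen) : Φ (s * t) w = Φ s (Φ t w) := by
  rw [map_mul]; rfl

/-- Each element of `S` acts injectively. -/
lemma Φ_injective (t : S) : Function.Injective (Φ t) := by
  induction t using PresentedMonoid.inductionOn with
  | _ u =>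
    induction u using FreeMonoid.inductionOn' with
    | one =>
      rw [map_one, map_one]
      exact fun a b h => h
    | of_mul g u ih =>
      rw [map_mul, map_mul, Function.End.mul_def]
      exact Function.Injective.comp (act1_injective g) ih

lemma rel_x (n : ℤ) (m : S) :
    gen .a * (gen .b * (gen (.x n) * m)) = gen .b * (gen (.x n) * m) := by
  have h : gen .a * gen .b * gen (.x n) = gen .b * gen (.x n) :=
    Quotient.sound (ConGen.Rel.of _ _ (SRel.xr n))
  rw [← mul_assoc, ← mul_assoc, h, mul_assoc]

lemma rel_y (n : ℤ) (m : S) :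
    gen .a * (gen .b * (gen (.y n) * m)) = gen .b * (gen (.y (n + 1)) * m) := by
  have h : gen .a * gen .b * gen (.y n) = gen .b * gen (.y (n + 1)) :=
    Quotient.sound (ConGen.Rel.of _ _ (SRel.yr n))
  rw [← mul_assoc, ← mul_assoc, h, mul_assoc]

lemma mk_cons (g : SGen) (w : List SGen) :
    PresentedMonoid.mk SRel (FreeMonoid.ofList (g :: w)) =
      gen g * PresentedMonoid.mk SRel (FreeMonoid.ofList w) := rfl

lemma mk_act1 (g : SGen) (w : List SGen) :
    PresentedMonoid.mk SRel (FreeMonoid.ofList (act1 g w)) =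
      gen g * PresentedMonoid.mk SRel (FreeMonoid.ofList w) := by
  cases g
  case a =>
    show PresentedMonoid.mk SRel (FreeMonoid.ofList (actA w)) = _
    rcases w with _ | ⟨g, _ | ⟨g', w⟩⟩
    · rfl
    · cases g <;> rfl
    · cases g <;> cases g' <;>
        simp only [actA, mk_cons] <;>
        first
          | rfl
          | rw [rel_x]
          | rw [rel_y]
  all_goals rfl

lemma mk_Φ (t : S) (w : List SGen) :
    PresentedMonoid.mk SRel (FreeMonoid.ofList (Φ t w)) =
      t * PresentedMonoid.mk SRel (FreeMonoid.ofList w) := by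
  induction t using PresentedMonoid.inductionOn with
  | _ u =>
    induction u using FreeMonoid.inductionOn' with
    | one =>
      rw [map_one, map_one]
      show PresentedMonoid.mk SRel (FreeMonoid.ofList w) = _
      rw [one_mul]
    | of_mul g u ih =>
      rw [map_mul]
      have h1 : Φ (PresentedMonoid.mk SRel (FreeMonoid.of g) *
          PresentedMonoid.mk SRel u) w =
          act1 g (Φ (PresentedMonoid.mk SRel u) w) := by
        rw [map_mul]; rfl
      rw [h1, mk_act1, ih, ← mul_assoc]
      rfl

/-- The monoid `S` is left cancellative. -/
theorem S_leftCancellative : ∀ s t t' : S, s * t = s * t' → t = t' := by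
  intro s t t' h
  have h2 : Φ s (Φ t []) = Φ s (Φ t' []) := by
    rw [← Φ_mul, ← Φ_mul, h]
  have h3 : Φ t [] = Φ t' [] := Φ_injective s h2
  have e : ∀ u : S, PresentedMonoid.mk SRel (FreeMonoid.ofList (Φ u [])) = u := by
    intro u
    rw [mk_Φ]
    show u * (1 : S) = u
    rw [mul_one]
  rw [← e t, ← e t', h3]
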